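/- arXiv:2012.04907 — 3 statements merged into one kernel-verified Lean document; each statement's English description precedes it below -/
import Mathlib

section
/- Let H be a complex Hilbert space, S₀ and S_I bounded symmetric operators on H, E ∈ ℝ, and Ψ a unit vector with S₀Ψ = EΨ. Suppose that for every κ ≠ 0 (in some punctured neighborhood of 0) there are a real number E(κ) and a unit vector Ξ(κ) with (S₀ + κS_I)Ξ(κ) = E(κ)Ξ(κ) and ⟪Ψ, Ξ(κ)⟫ ≠ 0, and that |⟪Ψ, Ξ(κ)⟫| → 1 as κ → 0. Then E(κ) = E + κ⟪Ψ, S_IΨ⟫ + o(κ) as κ → 0, i.e. (E(κ) − E − κ⟪Ψ, S_IΨ⟫)/κ tends to 0 as κ → 0 along κ ≠ 0. -/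
open scoped ComplexInnerProductSpace Topology

/-- Bounded-operator version of Arai's Theorem A: first-order asymptotic expansion
of a perturbed eigenvalue, assuming overlap of the unperturbed eigenvector with the
perturbed eigenvectors and that the overlap tends to 1. -/
theorem first_order_expansion_of_eigenvalue
    {H : Type*} [NormedAddCommGroup H] [InnerProductSpace ℂ H] [CompleteSpace H]
    (S₀ SI : H →L[ℂ] H)
    (hS₀ : ∀ x y : H, ⟪S₀ x, y⟫ = ⟪x, S₀ y⟫)
    (hSI : ∀ x y : H, ⟪SI x, y⟫ = ⟪x, SI y⟫)
    (E : ℝ) (Ψ : H) (hΨnorm : ‖Ψ‖ = 1) (hΨ : S₀ Ψ = (E : ℂ) • Ψ)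
    (E' : ℝ → ℝ) (Ξ : ℝ → H)
    (heig : ∀ᶠ κ in 𝓝[≠] (0 : ℝ),
      ‖Ξ κ‖ = 1 ∧ (S₀ + (κ : ℂ) • SI) (Ξ κ) = (E' κ : ℂ) • Ξ κ ∧ ⟪Ψ, Ξ κ⟫ ≠ 0)
    (hoverlap : Filter.Tendsto (fun κ : ℝ => ‖⟪Ψ, Ξ κ⟫‖) (𝓝[≠] (0 : ℝ)) (𝓝 1)) :
    Filter.Tendsto (fun κ : ℝ => (E' κ - E - κ * (⟪Ψ, SI Ψ⟫).re) / κ)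
      (𝓝[≠] (0 : ℝ)) (𝓝 0) := by
  set c : ℂ := ⟪Ψ, SI Ψ⟫ with hcdef
  set a : ℝ → ℂ := fun κ => ⟪Ψ, Ξ κ⟫ with hadef
  set q : ℝ → ℂ := fun κ => ⟪SI Ψ, Ξ κ⟫ / a κ with hqdef
  have hna : Filter.Tendsto (fun κ => ‖a κ‖) (𝓝[≠] (0:ℝ)) (𝓝 1) := by
    simpa using hoverlap
  -- residual tends to 0
  have hres : Filter.Tendsto (fun κ => ‖Ξ κ - a κ • Ψ‖) (𝓝[≠] (0:ℝ)) (𝓝 0) := by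
    have hsq : ∀ᶠ κ in 𝓝[≠] (0:ℝ), ‖Ξ κ - a κ • Ψ‖^2 = 1 - ‖a κ‖^2 := by
      filter_upwards [heig] with κ hk
      obtain ⟨h1, _, _⟩ := hk
      have := @norm_sub_sq ℂ H _ _ _ (Ξ κ) (a κ • Ψ)
      rw [inner_smul_right] at this
      have hip : ⟪Ξ κ, Ψ⟫ = starRingEnd ℂ (a κ) := by
        simp [hadef, inner_conj_symm]
      rw [hip] at this
      simp only [norm_smul, h1] at this
      rw [this]
      have hmc : (RCLike.re (a κ * starRingEnd ℂ (a κ)) : ℝ) = ‖a κ‖^2 := by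
        rw [Complex.mul_conj]
        simp [Complex.normSq_eq_norm_sq, sq]
      rw [hmc, hΨnorm]
      ring
    have h2 : Filter.Tendsto (fun κ => ‖Ξ κ - a κ • Ψ‖^2) (𝓝[≠] (0:ℝ)) (𝓝 0) := by
      have h1 : Filter.Tendsto (fun κ => 1 - ‖a κ‖^2) (𝓝[≠] (0:ℝ)) (𝓝 0) := by
        have := ((hna.pow 2).const_sub 1)
        simpa using this
      exact Filter.Tendsto.congr' (by filter_upwards [hsq] with κ h; exact h.symm) h1
    have h3 := (Real.continuous_sqrt.continuousAt (x := (0:ℝ))).tendsto.comp h2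
    rw [Real.sqrt_zero] at h3
    exact h3.congr (fun κ => Real.sqrt_sq (norm_nonneg _))
  -- q tends to c
  have hqc : Filter.Tendsto q (𝓝[≠] (0:ℝ)) (𝓝 c) := by
    have hc' : c = ⟪SI Ψ, Ψ⟫ := (hSI Ψ Ψ).symm
    have hbound : ∀ᶠ κ in 𝓝[≠] (0:ℝ),
        ‖q κ - c‖ ≤ ‖SI Ψ‖ * ‖Ξ κ - a κ • Ψ‖ / ‖a κ‖ := by
      filter_upwards [heig] with κ hk
      obtain ⟨_, _, h3⟩ := hk
      have hq : q κ - c = ⟪SI Ψ, Ξ κ - a κ • Ψ⟫ / a κ := by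
        rw [hqdef, hc', inner_sub_right, inner_smul_right]
        field_simp
        rw [sub_div, mul_div_cancel_left₀ _ (show a κ ≠ 0 from h3)]
      rw [hq, norm_div]
      gcongr
      exact norm_inner_le_norm _ _
    have hlim : Filter.Tendsto (fun κ => ‖SI Ψ‖ * ‖Ξ κ - a κ • Ψ‖ / ‖a κ‖)
        (𝓝[≠] (0:ℝ)) (𝓝 0) := by
      have := ((hres.const_mul ‖SI Ψ‖).div hna one_ne_zero)
      simpa [Pi.div_def] using this
    have : Filter.Tendsto (fun κ => q κ - c) (𝓝[≠] (0:ℝ)) (𝓝 0) :=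
      squeeze_zero_norm' hbound hlim
    simpa using this.add_const c
  -- eventual identity
  have hkey : ∀ᶠ κ in 𝓝[≠] (0:ℝ),
      (E' κ - E - κ * c.re) / κ = (q κ - c).re := by
    filter_upwards [heig, self_mem_nhdsWithin] with κ hk hκ
    obtain ⟨h1, h2, h3⟩ := hk
    have hκ0 : κ ≠ 0 := hκ
    have hκ' : (κ:ℂ) ≠ 0 := by exact_mod_cast hκ0
    have e1 : ⟪Ψ, S₀ (Ξ κ)⟫ = (E:ℂ) * a κ := by
      rw [← hS₀, hΨ, inner_smul_left]
      simp [Complex.conj_ofReal, hadef]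
    have e3 : ⟪Ψ, (S₀ + (κ:ℂ) • SI) (Ξ κ)⟫ = (E' κ : ℂ) * a κ := by
      rw [h2, inner_smul_right]
    rw [ContinuousLinearMap.add_apply, ContinuousLinearMap.smul_apply, inner_add_right,
      inner_smul_right, e1, ← hSI] at e3
    have e4 : (κ:ℂ) * ⟪SI Ψ, Ξ κ⟫ = ((E' κ : ℂ) - E) * a κ := by linear_combination e3
    have e5 : q κ = (((E' κ - E)/κ : ℝ) : ℂ) := by
      rw [hqdef]
      push_cast
      rw [div_eq_div_iff h3 hκ']
      linear_combination e4
    have : (q κ - c).re = (E' κ - E)/κ - c.re := by rw [e5]; simp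
    rw [this]
    field_simp
  -- conclude
  have hre : Filter.Tendsto (fun κ => (q κ - c).re) (𝓝[≠] (0:ℝ)) (𝓝 0) := by
    have : Filter.Tendsto (fun κ => q κ - c) (𝓝[≠] (0:ℝ)) (𝓝 0) := by
      simpa using hqc.sub_const c
    have := (Complex.continuous_re.continuousAt (x := (0:ℂ))).tendsto.comp this
    simpa [Function.comp_def] using this
  exact hre.congr' (by filter_upwards [hkey] with κ h; exact h.symm)
end

section
/- Let H be a complex Hilbert space, S₀ and S_I bounded symmetric operators on H, E₀ ∈ ℝ, Ψ a unit vector with S₀Ψ = E₀Ψ, and let P be the orthogonal projection onto the span of Ψ. Suppose R is a bounded operator on H satisfying P∘R = 0, R∘P = 0, and (S₀ − E₀)∘R = I − P (a reduced resolvent). Set η = R(S_IΨ), ν₀ = ‖η‖², a = Re⟪S_IΨ, η⟫ and b = Re⟪η, S_Iη⟫. Then for every κ ∈ ℝ there exists a unit vector Ξ ∈ H such that Re⟪Ξ, (S₀ + κS_I)Ξ⟫ = E₀ + (κ⟪Ψ, S_IΨ⟫ − aκ² + bκ³)/(1 + κ²ν₀); in particular the infimum of Re⟪Φ, (S₀ +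 κS_I)Φ⟫ over unit vectors Φ is at most E₀ + (κ⟪Ψ, S_IΨ⟫ − aκ² + bκ³)/(1 + κ²ν₀). -/
open scoped ComplexInnerProductSpace

/-- Variational (Brillouin–Wigner) third-order upper bound on the ground-state
energy (Proposition A / Lemma 3.1), for bounded symmetric operators, with the
reduced resolvent `R` of `S₀` at `E₀` given axiomatically. -/
theorem variational_upper_bound
    {H : Type*} [NormedAddCommGroup H] [InnerProductSpace ℂ H] [CompleteSpace H]
    (S₀ SI : H →L[ℂ] H)
    (hS₀ : ∀ x y : H, ⟪S₀ x, y⟫ = ⟪x, S₀ y⟫)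
    (hSI : ∀ x y : H, ⟪SI x, y⟫ = ⟪x, SI y⟫)
    (E₀ : ℝ) (Ψ : H) (hΨnorm : ‖Ψ‖ = 1) (hΨ : S₀ Ψ = (E₀ : ℂ) • Ψ)
    (P : H →L[ℂ] H) (hP : ∀ x : H, P x = (Submodule.orthogonalProjectionOnto (ℂ ∙ Ψ) x : H))
    (R : H →L[ℂ] H) (hPR : P ∘L R = 0) (hRP : R ∘L P = 0)
    (hres : (S₀ - (E₀ : ℂ) • (1 : H →L[ℂ] H)) ∘L R = 1 - P)
    (κ : ℝ) :
    (∃ Ξ : H, ‖Ξ‖ = 1 ∧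
      (⟪Ξ, (S₀ + (κ : ℂ) • SI) Ξ⟫).re =
        E₀ + (κ * (⟪Ψ, SI Ψ⟫).re - (⟪SI Ψ, R (SI Ψ)⟫).re * κ ^ 2
              + (⟪R (SI Ψ), SI (R (SI Ψ))⟫).re * κ ^ 3)
             / (1 + κ ^ 2 * ‖R (SI Ψ)‖ ^ 2)) ∧
    sInf {e : ℝ | ∃ Φ : H, ‖Φ‖ = 1 ∧ e = (⟪Φ, (S₀ + (κ : ℂ) • SI) Φ⟫).re} ≤
      E₀ + (κ * (⟪Ψ, SI Ψ⟫).re - (⟪SI Ψ, R (SI Ψ)⟫).re * κ ^ 2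
            + (⟪R (SI Ψ), SI (R (SI Ψ))⟫).re * κ ^ 3)
           / (1 + κ ^ 2 * ‖R (SI Ψ)‖ ^ 2) := by
  classical
  set η := R (SI Ψ) with hηdef
  set T := S₀ + (κ : ℂ) • SI with hTdef
  have hΨne : Ψ ≠ 0 := by
    intro h; rw [h, norm_zero] at hΨnorm; norm_num at hΨnorm
  have hPx : ∀ x : H, P x = ⟪Ψ, x⟫ • Ψ := by
    intro x
    rw [hP, ← Submodule.starProjection_apply, Submodule.starProjection_singleton, hΨnorm]
    norm_num
  have hPη : P η = 0 := by
    have h : (P ∘L R) (SI Ψ) = 0 := by rw [hPR]; rfl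
    simpa using h
  have hΨη : ⟪Ψ, η⟫ = 0 := by
    have h := hPη
    rw [hPx] at h
    rcases smul_eq_zero.mp h with h | h
    · exact h
    · exact absurd h hΨne
  have hηΨ : ⟪η, Ψ⟫ = 0 := by rw [← inner_conj_symm, hΨη, map_zero]
  have hΨΨ : ⟪Ψ, Ψ⟫ = 1 := by
    rw [inner_self_eq_norm_sq_to_K, hΨnorm]; norm_num
  have hηη : ⟪η, η⟫ = ((‖η‖ ^ 2 : ℝ) : ℂ) := by
    rw [inner_self_eq_norm_sq_to_K]; norm_num
  have hS₀η : S₀ η = SI Ψ - ⟪Ψ, SI Ψ⟫ • Ψ + (E₀ : ℂ) • η := by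
    have h := congrArg (fun A : H →L[ℂ] H => A (SI Ψ)) hres
    simp only [ContinuousLinearMap.comp_apply, ContinuousLinearMap.sub_apply,
      ContinuousLinearMap.smul_apply, ContinuousLinearMap.one_apply, hPx] at h
    rw [← hηdef] at h
    have : S₀ η - (E₀ : ℂ) • η = SI Ψ - ⟪Ψ, SI Ψ⟫ • Ψ := h
    rw [sub_eq_iff_eq_add] at this
    rw [this]
  set Φ := Ψ - (κ : ℂ) • η with hΦdef
  have hTΦ : T Φ = ((E₀ : ℂ) + (κ : ℂ) * ⟪Ψ, SI Ψ⟫) • Ψ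
      - ((κ : ℂ) * (E₀ : ℂ)) • η - ((κ : ℂ) * (κ : ℂ)) • SI η := by
    simp only [hTdef, hΦdef, ContinuousLinearMap.add_apply, ContinuousLinearMap.smul_apply,
      map_sub, map_smul, hΨ, hS₀η, smul_sub]
    module
  have hq : ⟪Φ, T Φ⟫ = (E₀ : ℂ) + (κ : ℂ) * ⟪Ψ, SI Ψ⟫ - (κ : ℂ) ^ 2 * ⟪SI Ψ, η⟫
      + (κ : ℂ) ^ 2 * (E₀ : ℂ) * ((‖η‖ ^ 2 : ℝ) : ℂ) + (κ : ℂ) ^ 3 * ⟪η, SI η⟫ := by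
    rw [hTΦ]
    have hΨSIη : ⟪Ψ, SI η⟫ = ⟪SI Ψ, η⟫ := (hSI Ψ η).symm
    simp only [hΦdef, inner_sub_left, inner_sub_right, inner_smul_left, inner_smul_right,
      hΨη, hηΨ, hΨΨ, hηη, hΨSIη, Complex.conj_ofReal, map_mul, map_add]
    ring
  have hnd : ‖Φ‖ ^ 2 = 1 + κ ^ 2 * ‖η‖ ^ 2 := by
    have h := @norm_sub_sq ℂ H _ _ _ Ψ ((κ : ℂ) • η)
    rw [inner_smul_right, hΨη, mul_zero, map_zero] at h
    rw [hΦdef] at *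
    rw [h, hΨnorm, norm_smul]
    simp [mul_pow, Complex.sq_norm, _root_.sq_abs]
  have hdpos : (0:ℝ) < 1 + κ ^ 2 * ‖η‖ ^ 2 := by positivity
  have hΦpos : (0:ℝ) < ‖Φ‖ := by
    have h2 : (0:ℝ) < ‖Φ‖ ^ 2 := by rw [hnd]; exact hdpos
    nlinarith [norm_nonneg Φ]
  set Ξ := ((‖Φ‖ : ℂ))⁻¹ • Φ with hΞdef
  have hΞnorm : ‖Ξ‖ = 1 := by
    rw [hΞdef, norm_smul, norm_inv, Complex.norm_real, Real.norm_eq_abs,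
      abs_of_pos hΦpos, inv_mul_cancel₀ hΦpos.ne']
  have hqre : (⟪Φ, T Φ⟫).re = E₀ + κ * (⟪Ψ, SI Ψ⟫).re - (⟪SI Ψ, η⟫).re * κ ^ 2
      + κ ^ 2 * E₀ * ‖η‖ ^ 2 + κ ^ 3 * (⟪η, SI η⟫).re := by
    rw [hq]
    simp only [← Complex.ofReal_pow, Complex.add_re, Complex.sub_re, Complex.ofReal_re,
      Complex.re_ofReal_mul, mul_assoc]
    ring
  have hval : (⟪Ξ, T Ξ⟫).re =
      E₀ + (κ * (⟪Ψ, SI Ψ⟫).re - (⟪SI Ψ, η⟫).re * κ ^ 2 + (⟪η, SI η⟫).re * κ ^ 3)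
        / (1 + κ ^ 2 * ‖η‖ ^ 2) := by
    have hTΞ : T Ξ = ((‖Φ‖ : ℂ))⁻¹ • T Φ := by rw [hΞdef, map_smul]
    have hi : ⟪Ξ, T Ξ⟫ = ((((‖Φ‖ ^ 2 : ℝ))⁻¹ : ℝ) : ℂ) * ⟪Φ, T Φ⟫ := by
      rw [hΞdef, hTΞ, inner_smul_left, inner_smul_right, ← mul_assoc]
      rw [← Complex.ofReal_inv]
      rw [Complex.conj_ofReal, ← Complex.ofReal_mul, ← mul_inv, ← pow_two]
    rw [hi, Complex.re_ofReal_mul, hqre, hnd]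
    field_simp
    ring
  refine ⟨⟨Ξ, hΞnorm, hval⟩, ?_⟩
  rw [← hval]
  apply csInf_le
  · refine ⟨-‖T‖, ?_⟩
    rintro e ⟨Φ', hΦ', rfl⟩
    have h1 : ‖⟪Φ', T Φ'⟫‖ ≤ ‖T‖ := by
      calc ‖⟪Φ', T Φ'⟫‖ ≤ ‖Φ'‖ * ‖T Φ'‖ := norm_inner_le_norm _ _
        _ ≤ ‖Φ'‖ * (‖T‖ * ‖Φ'‖) := by
            gcongr
            exact T.le_opNorm Φ'
        _ = ‖T‖ := by rw [hΦ']; ring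
    have h2 := Complex.abs_re_le_norm ⟪Φ', T Φ'⟫
    cases abs_cases (⟪Φ', T Φ'⟫).re with
    | inl h => linarith [h.1]
    | inr h => linarith [h.1]
  · exact ⟨Ξ, hΞnorm, rfl⟩
end

section
/- Let H be a complex Hilbert space and let A and B be bounded symmetric operators on H that commute (A∘B = B∘A). Then for every Φ ∈ H, |⟪A³Φ, B³Φ⟫| ≤ Re⟪A⁴Φ, B⁴Φ⟫ + (1/2)‖Φ‖². -/
open scoped ComplexInnerProductSpace

/-- Inequality (12/04a): for commuting bounded symmetric operators `A`, `B`,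
`|⟪A³Φ, B³Φ⟫| ≤ Re⟪A⁴Φ, B⁴Φ⟫ + (1/2)‖Φ‖²`. -/
theorem abs_inner_cube_le'
    {H : Type*} [NormedAddCommGroup H] [InnerProductSpace ℂ H] [CompleteSpace H]
    (A B : H →L[ℂ] H)
    (hA : ∀ x y : H, ⟪A x, y⟫ = ⟪x, A y⟫)
    (hB : ∀ x y : H, ⟪B x, y⟫ = ⟪x, B y⟫)
    (hAB : A ∘L B = B ∘L A) (Φ : H) :
    ‖⟪A (A (A Φ)), B (B (B Φ))⟫‖ ≤
      (⟪A (A (A (A Φ))), B (B (B (B Φ)))⟫).re + (1 / 2) * ‖Φ‖ ^ 2 := by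
  have hc : ∀ x : H, A (B x) = B (A x) := fun x =>
    congrFun (congrArg DFunLike.coe hAB) x
  set ψ₁ := A (B Φ) with hψ1
  set ψ₂ := A (A (B (B Φ))) with hψ2
  have h3 : ⟪A (A (A Φ)), B (B (B Φ))⟫ = ⟪ψ₂, ψ₁⟫ := by
    calc ⟪A (A (A Φ)), B (B (B Φ))⟫
        = ⟪B (A (A (A Φ))), B (B Φ)⟫ := (hB _ _).symm
      _ = ⟪A (A (A (B Φ))), B (B Φ)⟫ := by simp only [← hc]
      _ = ⟪A (A (B Φ)), A (B (B Φ))⟫ := hA _ _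
      _ = ⟪A (A (B Φ)), B (A (B Φ))⟫ := by simp only [hc]
      _ = ⟪B (A (A (B Φ))), A (B Φ)⟫ := (hB _ _).symm
      _ = ⟪ψ₂, ψ₁⟫ := by rw [hψ2, hψ1]; simp only [← hc]
  have h4 : ⟪A (A (A (A Φ))), B (B (B (B Φ)))⟫ = ⟪ψ₂, ψ₂⟫ := by
    calc ⟪A (A (A (A Φ))), B (B (B (B Φ)))⟫
        = ⟪B (A (A (A (A Φ)))), B (B (B Φ))⟫ := (hB _ _).symm
      _ = ⟪B (B (A (A (A (A Φ))))), B (B Φ)⟫ := (hB _ _).symm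
      _ = ⟪A (A (A (A (B (B Φ))))), B (B Φ)⟫ := by simp only [← hc]
      _ = ⟪A (A (A (B (B Φ)))), A (B (B Φ))⟫ := hA _ _
      _ = ⟪ψ₂, A (A (B (B Φ)))⟫ := hA _ _
      _ = ⟪ψ₂, ψ₂⟫ := rfl
  have hkey : ‖ψ₁‖ ^ 2 ≤ ‖Φ‖ * ‖ψ₂‖ := by
    have h1 : ⟪ψ₁, ψ₁⟫ = ⟪Φ, ψ₂⟫ := by
      calc ⟪ψ₁, ψ₁⟫ = ⟪B Φ, A ψ₁⟫ := hA _ _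
        _ = ⟪Φ, B (A ψ₁)⟫ := hB _ _
        _ = ⟪Φ, ψ₂⟫ := by rw [hψ1, hψ2]; simp only [← hc]
    have h2 : ‖ψ₁‖ ^ 2 = (⟪Φ, ψ₂⟫ : ℂ).re := by
      rw [← h1, inner_self_eq_norm_sq_to_K]; norm_cast
    rw [h2]
    calc (⟪Φ, ψ₂⟫ : ℂ).re ≤ ‖(⟪Φ, ψ₂⟫ : ℂ)‖ := Complex.re_le_norm _
      _ ≤ ‖Φ‖ * ‖ψ₂‖ := norm_inner_le_norm _ _
  have h5 : (⟪ψ₂, ψ₂⟫ : ℂ).re = ‖ψ₂‖ ^ 2 := by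
    rw [inner_self_eq_norm_sq_to_K]; norm_cast
  rw [h3, h4, h5]
  have habs : ‖⟪ψ₂, ψ₁⟫‖ ≤ ‖ψ₂‖ * ‖ψ₁‖ := by
    exact norm_inner_le_norm _ _
  have h0 : (0:ℝ) ≤ ‖ψ₂‖ := norm_nonneg _
  have h0' : (0:ℝ) ≤ ‖ψ₁‖ := norm_nonneg _
  have h0'' : (0:ℝ) ≤ ‖Φ‖ := norm_nonneg _
  nlinarith [sq_nonneg (‖ψ₂‖ - ‖ψ₁‖), sq_nonneg (‖ψ₂‖ - ‖Φ‖)]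
end
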